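/- Let N = n·s with n, s ∈ ℕ, and let F₁, …, F_N : ℝ^d → ℝ be twice continuously differentiable with f = (1/N)∑_{i=1}^N F_i. Suppose ‖∇²F_i(w*)‖² ≤ β₁H ‖∇²f(w*)‖² + β₂H for all i (with β₁H, β₂H ≥ 0) and ‖∇²f(w*)‖ ≤ L. Let S₀, S₁, … ⊆ {1,…,N} be sample sets of size s chosen deterministically without replacement in a cyclic fashion (S_i = S_{i mod n} where S₀, …, S_{n−1} partition {1,…,N}), and write ∇²F_S(w) = (1/|S|)∑_{i∈S}∇²F_i(w). Then for every k ≥ 0 and every w_k ∈ ℝ^d: ‖((1/(k+1))∑_{i=0}^k ∇²F_{S_i}(w*) − ∇²f(w*))(w_k − w*)‖ ≤ (C_{s,d}/(k+1))·((n−1)²/n)·‖w_k − w*‖, where C_{s,d} = 2√(β₁H L² + β₂H). -/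

import Mathlib

set_option maxHeartbeats 1000000
set_option synthInstance.maxHeartbeats 200000

open Finset
open scoped RealInnerProductSpace

noncomputable section

abbrev Vec (d : ℕ) := EuclideanSpace ℝ (Fin d)

/-- Periodic sum helper. -/
lemma sum_range_mul_of_periodic {M : Type*} [AddCommMonoid M] (g : ℕ → M) (n : ℕ)
    (hper : ∀ i, g i = g (i % n)) (q : ℕ) :
    ∑ i ∈ Finset.range (q * n), g i = q • ∑ i ∈ Finset.range n, g i := by
  induction q with
  | zero => simp
  | succ q ih =>
    have h : (q + 1) * n = q * n + n := by ring
    rw [h, Finset.sum_range_add, ih, succ_nsmul]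
    congr 1
    refine Finset.sum_congr rfl fun i _ => ?_
    rw [hper (q * n + i), Nat.mul_comm q n, Nat.mul_add_mod, ← hper i]

/-- O(1/k) bound on the sampling error at the optimum of the uniformly
path-averaged subsampled Hessian under deterministic cyclic sampling without
replacement. -/
theorem cyclic_sampling_error_at_optimum {d N n s : ℕ}
    (hn : 0 < n) (hs : 0 < s) (hns : n * s = N)
    (F : Fin N → Vec d → ℝ) (gradF : Fin N → Vec d → Vec d)
    (HF : Fin N → Vec d → (Vec d →L[ℝ] Vec d))
    (f : Vec d → ℝ) (gradf : Vec d → Vec d) (Hf : Vec d → (Vec d →L[ℝ] Vec d))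
    (hf : ∀ x, f x = (N : ℝ)⁻¹ * ∑ i, F i x)
    (hFsmooth : ∀ i, ContDiff ℝ 2 (F i))
    (hgradF : ∀ i x, HasGradientAt (F i) (gradF i x) x)
    (hHF : ∀ i x, HasFDerivAt (gradF i) (HF i x) x)
    (hgradf : ∀ x, HasGradientAt f (gradf x) x)
    (hHf : ∀ x, HasFDerivAt gradf (Hf x) x)
    (wstar : Vec d)
    (β₁H β₂H L : ℝ) (hβ₁ : 0 ≤ β₁H) (hβ₂ : 0 ≤ β₂H) (hL : 0 < L)
    (hHvar : ∀ i, ‖HF i wstar‖ ^ 2 ≤ β₁H * ‖Hf wstar‖ ^ 2 + β₂H)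
    (hHfL : ‖Hf wstar‖ ≤ L)
    (S : ℕ → Finset (Fin N)) (hScard : ∀ i, (S i).card = s)
    (hScyc : ∀ i, S i = S (i % n))
    (hSdisj : ∀ i j, i < j → j < n → Disjoint (S i) (S j))
    (hScover : (Finset.range n).biUnion (fun i => S i) = Finset.univ) :
    ∀ (k : ℕ) (wk : Vec d),
      ‖(((k : ℝ) + 1)⁻¹ • ∑ i ∈ Finset.range (k + 1),
            (s : ℝ)⁻¹ • ∑ j ∈ S i, HF j wstar) (wk - wstar)
          - Hf wstar (wk - wstar)‖ ≤
        2 * Real.sqrt (β₁H * L ^ 2 + β₂H) / ((k : ℝ) + 1) *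
          (((n : ℝ) - 1) ^ 2 / n) * ‖wk - wstar‖ := by
  intro k wk
  have hs0 : (s : ℝ) ≠ 0 := Nat.cast_ne_zero.2 hs.ne'
  have hnR : (0 : ℝ) < n := by exact_mod_cast hn
  have hNpos : 0 < N := hns ▸ Nat.mul_pos hn hs
  have hN0 : (N : ℝ) ≠ 0 := Nat.cast_ne_zero.2 hNpos.ne'
  set v : Vec d := wk - wstar with hv
  set B : ℝ := Real.sqrt (β₁H * L ^ 2 + β₂H) with hB
  have hBnn : 0 ≤ B := Real.sqrt_nonneg _
  -- bound on each ‖HF j wstar‖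
  have hHFle : ∀ j, ‖HF j wstar‖ ≤ B := by
    intro j
    have h1 : ‖HF j wstar‖ ^ 2 ≤ β₁H * L ^ 2 + β₂H := by
      refine (hHvar j).trans ?_
      have h2 : ‖Hf wstar‖ ^ 2 ≤ L ^ 2 := by
        nlinarith [norm_nonneg (Hf wstar)]
      nlinarith
    exact (Real.le_sqrt (norm_nonneg _) (by nlinarith [sq_nonneg L])).2 h1
  -- gradient of f
  have hgrad_eq : ∀ x, gradf x = (N : ℝ)⁻¹ • ∑ i, gradF i x := by
    intro x
    refine (hgradf x).unique ?_
    have h1 : HasFDerivAt (fun y => ∑ i, F i y)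
        (∑ i, InnerProductSpace.toDual ℝ (Vec d) (gradF i x)) x :=
      HasFDerivAt.fun_sum fun i _ => (hgradF i x).hasFDerivAt
    have h2 : HasFDerivAt (fun y => (N : ℝ)⁻¹ * ∑ i, F i y)
        ((N : ℝ)⁻¹ • ∑ i, InnerProductSpace.toDual ℝ (Vec d) (gradF i x)) x :=
      h1.const_mul _
    have hfe : f = fun y => (N : ℝ)⁻¹ * ∑ i, F i y := funext hf
    rw [← hfe] at h2
    rw [hasGradientAt_iff_hasFDerivAt]
    convert h2 using 1
    case e'_12 => simp [map_sum, map_smul]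
    all_goals rfl
  have hgradf_fun : gradf = fun x => (N : ℝ)⁻¹ • ∑ i, gradF i x := funext hgrad_eq
  -- Hessian of f at wstar
  have hHf_eq : Hf wstar = (N : ℝ)⁻¹ • ∑ i, HF i wstar := by
    refine (hHf wstar).unique ?_
    rw [hgradf_fun]
    exact (HasFDerivAt.fun_sum fun i _ => hHF i wstar).fun_const_smul _
  set H : Vec d →L[ℝ] Vec d := Hf wstar with hHdef
  set A : ℕ → (Vec d →L[ℝ] Vec d) := fun i => (s : ℝ)⁻¹ • ∑ j ∈ S i, HF j wstar with hA
  have hAper : ∀ i, A i = A (i % n) := by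
    intro i; simp only [hA]; rw [hScyc i]
  have hAnorm : ∀ i, ‖A i‖ ≤ B := by
    intro i
    have h1 : ‖∑ j ∈ S i, HF j wstar‖ ≤ (S i).card • B :=
      (norm_sum_le _ _).trans (Finset.sum_le_card_nsmul _ _ _ fun j _ => hHFle j)
    rw [hScard i, nsmul_eq_mul] at h1
    have hinv : (0:ℝ) ≤ (s : ℝ)⁻¹ := inv_nonneg.2 (Nat.cast_nonneg s)
    calc ‖A i‖ = (s : ℝ)⁻¹ * ‖∑ j ∈ S i, HF j wstar‖ := by
          show ‖(s : ℝ)⁻¹ • ∑ j ∈ S i, HF j wstar‖ = _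
          rw [norm_smul ((s : ℝ)⁻¹) (∑ j ∈ S i, HF j wstar), Real.norm_eq_abs,
            abs_of_nonneg hinv]
      _ ≤ (s : ℝ)⁻¹ * ((s : ℝ) * B) := mul_le_mul_of_nonneg_left h1 hinv
      _ = B := by field_simp
  -- the full-cycle sum equals n • H
  have hsum_n : ∑ i ∈ Finset.range n, A i = (n : ℝ) • H := by
    have hdisj : ∀ i ∈ Finset.range n, ∀ j ∈ Finset.range n, i ≠ j →
        Disjoint (S i) (S j) := by
      intro i hi j hj hij
      rcases lt_or_gt_of_ne hij with h | h
      · exact hSdisj i j h (Finset.mem_range.1 hj)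
      · exact (hSdisj j i h (Finset.mem_range.1 hi)).symm
    have h1 : ∑ i ∈ Finset.range n, A i
        = (s : ℝ)⁻¹ • ∑ j ∈ (Finset.range n).biUnion (fun i => S i), HF j wstar := by
      rw [Finset.sum_biUnion hdisj, Finset.smul_sum]
    rw [h1, hScover, hHf_eq, smul_smul]
    congr 1
    have hNe : (N : ℝ) = (n : ℝ) * s := by exact_mod_cast hns.symm
    rw [hNe]
    field_simp
  set q : ℕ := (k + 1) / n with hq
  set r : ℕ := (k + 1) % n with hr
  have hk1 : k + 1 = q * n + r := by
    rw [hq, hr, Nat.mul_comm]; exact (Nat.div_add_mod (k + 1) n).symm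
  have hrn : r < n := Nat.mod_lt _ hn
  have hcast : ((k : ℝ) + 1) = (q : ℝ) * n + r := by
    have h := congrArg (fun m : ℕ => (m : ℝ)) hk1
    push_cast at h; linarith
  -- split the sum
  have hsplit : ∑ i ∈ Finset.range (k + 1), A i
      = q • ∑ i ∈ Finset.range n, A i + ∑ i ∈ Finset.range r, A i := by
    rw [hk1, Finset.sum_range_add, sum_range_mul_of_periodic A n hAper q]
    congr 1
    refine Finset.sum_congr rfl fun i _ => ?_
    rw [hAper (q * n + i), Nat.mul_comm q n, Nat.mul_add_mod, ← hAper i]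
  set D : Vec d →L[ℝ] Vec d := (∑ i ∈ Finset.range r, A i) - (r : ℝ) • H with hD
  have hkpos : (0 : ℝ) < (k : ℝ) + 1 := by positivity
  -- the averaged operator difference
  have hTeq : (((k : ℝ) + 1)⁻¹ • ∑ i ∈ Finset.range (k + 1), A i) - H
      = ((k : ℝ) + 1)⁻¹ • D := by
    rw [hsplit, hsum_n, hD, ← Nat.cast_smul_eq_nsmul ℝ q]
    match_scalars <;> field_simp <;> linarith [hcast]
  -- norm bound on D
  have hDnorm : ‖D‖ ≤ 2 * ((n : ℝ) - 1) ^ 2 / n * B := by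
    have hHcyc : H = (n : ℝ)⁻¹ • ∑ i ∈ Finset.range n, A i := by
      rw [hsum_n, smul_smul, inv_mul_cancel₀ (ne_of_gt hnR), one_smul]
    have hsum_union : ∑ i ∈ Finset.range n, A i
        = ∑ i ∈ Finset.range r, A i + ∑ i ∈ Finset.Ico r n, A i := by
      rw [Finset.range_eq_Ico, ← Finset.sum_Ico_consecutive _ (Nat.zero_le r) (le_of_lt hrn),
        ← Finset.range_eq_Ico]
    have hDeq : D = (1 - (r : ℝ) / n) • ∑ i ∈ Finset.range r, A i
        - ((r : ℝ) / n) • ∑ i ∈ Finset.Ico r n, A i := by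
      rw [hD, hHcyc, smul_smul, hsum_union]
      match_scalars <;> field_simp
    have h1 : ‖∑ i ∈ Finset.range r, A i‖ ≤ (r : ℝ) * B := by
      refine (norm_sum_le _ _).trans ?_
      have h := Finset.sum_le_card_nsmul (Finset.range r) (fun i => ‖A i‖) B
        (fun j _ => hAnorm j)
      rw [Finset.card_range, nsmul_eq_mul] at h
      exact h
    have h2 : ‖∑ i ∈ Finset.Ico r n, A i‖ ≤ ((n : ℝ) - r) * B := by
      refine (norm_sum_le _ _).trans ?_
      have h3 := Finset.sum_le_card_nsmul (Finset.Ico r n) (fun i => ‖A i‖) B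
        (fun j _ => hAnorm j)
      rw [Nat.card_Ico, nsmul_eq_mul] at h3
      have hc : ((n - r : ℕ) : ℝ) = (n : ℝ) - r := by
        have hle := le_of_lt hrn
        push_cast [hle]
        ring
      rw [hc] at h3
      exact h3
    have hr0 : (0 : ℝ) ≤ r := Nat.cast_nonneg r
    have hrn' : (r : ℝ) ≤ (n : ℝ) - 1 := by
      have h : (r : ℝ) + 1 ≤ n := by exact_mod_cast hrn
      linarith
    have hfrac0 : (0 : ℝ) ≤ 1 - (r : ℝ) / n := by
      rw [sub_nonneg, div_le_one hnR]; linarith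
    have hfrac1 : (0 : ℝ) ≤ (r : ℝ) / n := div_nonneg hr0 (le_of_lt hnR)
    have hkey : (r : ℝ) * ((n : ℝ) - r) ≤ ((n : ℝ) - 1) ^ 2 := by
      rcases Nat.eq_zero_or_pos r with h | h
      · rw [h]; push_cast; nlinarith
      · have hr1 : (1 : ℝ) ≤ r := by exact_mod_cast h
        nlinarith [mul_nonneg (by linarith : (0:ℝ) ≤ (n:ℝ) - 1 - r)
            (by linarith : (0:ℝ) ≤ (n:ℝ) - 1),
          mul_nonneg (by linarith : (0:ℝ) ≤ (r:ℝ) - 1) (by linarith : (0:ℝ) ≤ (r:ℝ))]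
    calc ‖D‖ ≤ ‖(1 - (r : ℝ) / n) • ∑ i ∈ Finset.range r, A i‖
          + ‖((r : ℝ) / n) • ∑ i ∈ Finset.Ico r n, A i‖ := by
          rw [hDeq]; exact norm_sub_le _ _
      _ ≤ (1 - (r : ℝ) / n) * ((r : ℝ) * B) + ((r : ℝ) / n) * (((n : ℝ) - r) * B) := by
          rw [norm_smul (1 - (r : ℝ) / n) (∑ i ∈ Finset.range r, A i),
            norm_smul ((r : ℝ) / n) (∑ i ∈ Finset.Ico r n, A i),
            Real.norm_eq_abs, Real.norm_eq_abs,
            abs_of_nonneg hfrac0, abs_of_nonneg hfrac1]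
          exact add_le_add (mul_le_mul_of_nonneg_left h1 hfrac0)
            (mul_le_mul_of_nonneg_left h2 hfrac1)
      _ = 2 * ((r : ℝ) * ((n : ℝ) - r)) / n * B := by field_simp; ring
      _ ≤ 2 * ((n : ℝ) - 1) ^ 2 / n * B := by
          refine mul_le_mul_of_nonneg_right ?_ hBnn
          gcongr
  -- assemble
  show ‖(((k : ℝ) + 1)⁻¹ • ∑ i ∈ Finset.range (k + 1), A i) v - H v‖ ≤
      2 * B / ((k : ℝ) + 1) * (((n : ℝ) - 1) ^ 2 / n) * ‖v‖
  rw [← ContinuousLinearMap.sub_apply, hTeq]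
  calc ‖(((k : ℝ) + 1)⁻¹ • D) v‖ ≤ ‖((k : ℝ) + 1)⁻¹ • D‖ * ‖v‖ :=
        ContinuousLinearMap.le_opNorm _ _
    _ ≤ ((k : ℝ) + 1)⁻¹ * (2 * ((n : ℝ) - 1) ^ 2 / n * B) * ‖v‖ := by
        refine mul_le_mul_of_nonneg_right ?_ (norm_nonneg _)
        rw [norm_smul (((k : ℝ) + 1)⁻¹) D, Real.norm_eq_abs,
          abs_of_nonneg (le_of_lt (inv_pos.2 hkpos))]
        exact mul_le_mul_of_nonneg_left hDnorm (le_of_lt (inv_pos.2 hkpos))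
    _ = 2 * B / ((k : ℝ) + 1) * (((n : ℝ) - 1) ^ 2 / n) * ‖v‖ := by
        ring
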